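/- Let ψ ≥ 2 be a natural number and set φ = 2ψ − 3. Then for any two distinct vertices a and b of the ψ×ψ grid graph, there exists a permutation σ of the vertices that is a composition of at most φ adjacent transpositions of the grid graph such that σ(b) = b and σ(a) is adjacent to b. -/

import Mathlib

/-- The ψ×ψ grid graph on `Fin ψ × Fin ψ`: two vertices are adjacent iff their
L1 distance (sum of absolute differences of coordinates, as naturals) is 1. -/
def gridGraph (ψ : ℕ) : SimpleGraph (Fin ψ × Fin ψ) where
  Adj u v := Nat.dist u.1.val v.1.val + Nat.dist u.2.val v.2.val = 1
  symm := by
    refine ⟨fun u v h => ?_⟩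
    simpa [Nat.dist_comm] using h
  loopless := by
    refine ⟨fun u h => ?_⟩
    simp [Nat.dist_self] at h

/-- L1 distance on the grid. -/
def gridD {ψ : ℕ} (a b : Fin ψ × Fin ψ) : ℕ :=
  Nat.dist a.1.val b.1.val + Nat.dist a.2.val b.2.val

lemma gridD_eq_zero {ψ : ℕ} {a b : Fin ψ × Fin ψ} (h : gridD a b = 0) : a = b := by
  unfold gridD Nat.dist at h
  have h1 : a.1.val = b.1.val := by omega
  have h2 : a.2.val = b.2.val := by omega
  exact Prod.ext (Fin.ext h1) (Fin.ext h2)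

/-- Step lemma: if the distance is ≥ 2, there is a neighbour of `a` strictly
closer to `b`. -/
lemma grid_step {ψ : ℕ} (a b : Fin ψ × Fin ψ) (h2 : 2 ≤ gridD a b) :
    ∃ a' : Fin ψ × Fin ψ, (gridGraph ψ).Adj a a' ∧ gridD a' b + 1 = gridD a b := by
  by_cases hx : a.1.val = b.1.val
  · -- move in y
    by_cases hy : a.2.val < b.2.val
    · refine ⟨(a.1, ⟨a.2.val + 1, by have := b.2.isLt; omega⟩), ?_, ?_⟩
      · show Nat.dist _ _ + Nat.dist _ _ = 1
        simp only [Nat.dist]; omega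
      · unfold gridD Nat.dist at h2 ⊢
        simp only
        omega
    · have hy' : b.2.val < a.2.val := by
        unfold gridD Nat.dist at h2; omega
      refine ⟨(a.1, ⟨a.2.val - 1, by have := a.2.isLt; omega⟩), ?_, ?_⟩
      · show Nat.dist _ _ + Nat.dist _ _ = 1
        simp only [Nat.dist]; omega
      · unfold gridD Nat.dist at h2 ⊢
        simp only
        omega
  · by_cases hx' : a.1.val < b.1.val
    · refine ⟨(⟨a.1.val + 1, by have := b.1.isLt; omega⟩, a.2), ?_, ?_⟩
      · show Nat.dist _ _ + Nat.dist _ _ = 1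
        simp only [Nat.dist]; omega
      · unfold gridD Nat.dist at h2 ⊢
        simp only
        omega
    · have hx'' : b.1.val < a.1.val := by omega
      refine ⟨(⟨a.1.val - 1, by have := a.1.isLt; omega⟩, a.2), ?_, ?_⟩
      · show Nat.dist _ _ + Nat.dist _ _ = 1
        simp only [Nat.dist]; omega
      · unfold gridD Nat.dist at h2 ⊢
        simp only
        omega

lemma grid_key {ψ : ℕ} (d : ℕ) : ∀ a b : Fin ψ × Fin ψ, gridD a b = d → a ≠ b →
    ∃ L : List ((Fin ψ × Fin ψ) × (Fin ψ × Fin ψ)),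
      L.length + 1 ≤ d ∧
      (∀ p ∈ L, (gridGraph ψ).Adj p.1 p.2) ∧
      (L.map fun p => Equiv.swap p.1 p.2).prod b = b ∧
      (gridGraph ψ).Adj ((L.map fun p => Equiv.swap p.1 p.2).prod a) b := by
  induction d using Nat.strong_induction_on with
  | _ d ih =>
    intro a b hd hab
    have hd0 : d ≠ 0 := by
      intro h; exact hab (gridD_eq_zero (hd.trans h))
    by_cases h1 : d = 1
    · exact ⟨[], by simp; omega, by simp, by simp, by
        simpa using show (gridGraph ψ).Adj a b from by
          have : gridD a b = 1 := hd.trans (by rw [h1])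
          exact this⟩
    · have h2 : 2 ≤ gridD a b := by omega
      obtain ⟨a', hadj, hstep⟩ := grid_step a b h2
      have ha'b : a' ≠ b := by
        intro h
        have : gridD a' b = 0 := by
          rw [h]; unfold gridD; simp [Nat.dist_self]
        omega
      have hab' : a ≠ a' := (gridGraph ψ).ne_of_adj hadj
      obtain ⟨L, hlen, hmem, hb, hfin⟩ := ih (d - 1) (by omega) a' b (by omega) ha'b
      refine ⟨L ++ [(a, a')], ?_, ?_, ?_, ?_⟩
      · simp; omega
      · intro p hp
        rcases List.mem_append.mp hp with h | h
        · exact hmem p h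
        · simp at h; rw [h]; exact hadj
      · simp only [List.map_append, List.prod_append, List.map_cons, List.map_nil,
          List.prod_cons, List.prod_nil, mul_one, Equiv.Perm.mul_apply]
        rw [Equiv.swap_apply_of_ne_of_ne (Ne.symm hab) (Ne.symm ha'b)]
        exact hb
      · simp only [List.map_append, List.prod_append, List.map_cons, List.map_nil,
          List.prod_cons, List.prod_nil, mul_one, Equiv.Perm.mul_apply]
        rw [Equiv.swap_apply_left]
        exact hfin

/-- For ψ ≥ 2 and φ = 2ψ − 3: any two distinct vertices `a`, `b` of the ψ×ψ
grid graph can be brought adjacent using at most φ adjacent transpositions,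
leaving `b` fixed. -/
theorem gridGraph_swaps_le_phi (ψ : ℕ) (hψ : 2 ≤ ψ) (φ : ℕ) (hφ : φ = 2 * ψ - 3)
    (a b : Fin ψ × Fin ψ) (hab : a ≠ b) :
    ∃ L : List ((Fin ψ × Fin ψ) × (Fin ψ × Fin ψ)),
      L.length ≤ φ ∧
      (∀ p ∈ L, (gridGraph ψ).Adj p.1 p.2) ∧
      (L.map fun p => Equiv.swap p.1 p.2).prod b = b ∧
      (gridGraph ψ).Adj ((L.map fun p => Equiv.swap p.1 p.2).prod a) b := by
  obtain ⟨L, hlen, hmem, hb, hfin⟩ := grid_key (gridD a b) a b rfl hab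
  have hD : gridD a b ≤ 2 * ψ - 2 := by
    unfold gridD Nat.dist
    have := a.1.isLt; have := a.2.isLt; have := b.1.isLt; have := b.2.isLt
    omega
  exact ⟨L, by omega, hmem, hb, hfin⟩
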